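/- arXiv:2008.09449 — 2 statements merged into one kernel-verified Lean document; each statement's English description precedes it below -/
import Mathlib

section
/- For every n ∈ ℕ, the group of order-preserving group automorphisms of ℚ^n_lex is isomorphic to the group of n×n upper triangular rational matrices with positive diagonal entries. -/
/-- `Fin n → R` with the lexicographic order in which the **last** coordinate is the most
significant: `x < y` iff `x ≠ y` and `x i < y i` at the largest index `i` where `x` and `y`
differ. -/
def LexPow (R : Type*) (n : ℕ) : Type _ := Fin n → R

namespace LexPow

variable {R : Type*} {n : ℕ}

/-- The identity bijection between `Fin n → R` and `LexPow R n`. -/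
def of : (Fin n → R) ≃ LexPow R n := Equiv.refl _

instance : CoeFun (LexPow R n) (fun _ => Fin n → R) := ⟨fun x => x⟩

instance [AddCommGroup R] : AddCommGroup (LexPow R n) :=
  inferInstanceAs (AddCommGroup (Fin n → R))

/-- The map reversing coordinates, into the Mathlib lexicographic order (in which the *first*
coordinate is most significant). -/
def toRevLex (x : LexPow R n) : Lex (Fin n → R) :=
  toLex (fun i : Fin n => of.symm x (Fin.rev i))

theorem toRevLex_injective : Function.Injective (toRevLex (R := R) (n := n)) := by
  intro a b hab
  refine of.symm.injective (funext fun i => ?_)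
  have h := congrFun (congrArg ofLex hab) (Fin.rev i)
  simpa [toRevLex, Fin.rev_rev] using h

noncomputable instance [AddCommGroup R] [LinearOrder R] [IsOrderedAddMonoid R] :
    LinearOrder (LexPow R n) :=
  LinearOrder.lift' (toRevLex (R := R) (n := n)) toRevLex_injective

instance [AddCommGroup R] [LinearOrder R] [IsOrderedAddMonoid R] :
    IsOrderedAddMonoid (LexPow R n) where
  add_le_add_left := fun a b hab c => by
    show toRevLex (a + c) ≤ toRevLex (b + c)
    have h : toRevLex a ≤ toRevLex b := hab
    exact add_le_add_left h (toRevLex c)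

end LexPow

section Matrices

variable {R : Type*} {n : ℕ}

theorem diag_mul_of_triangular [CommRing R] {A B : Matrix (Fin n) (Fin n) R}
    (hA : A.BlockTriangular id) (hB : B.BlockTriangular id) (i : Fin n) :
    (A * B) i i = A i i * B i i := by
  rw [Matrix.mul_apply]
  apply Finset.sum_eq_single i
  · intro k _ hk
    rcases lt_or_gt_of_ne hk with h | h
    · rw [hA (show (id : Fin n → Fin n) k < id i from h), zero_mul]
    · rw [hB (show (id : Fin n → Fin n) i < id k from h), mul_zero]
  · intro h; exact absurd (Finset.mem_univ i) h

/-- The group `UT(n,R)` of upper triangular `n × n` matrices over `R` with all diagonal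
entries equal to `1`, realised as a subgroup of the group of units of the matrix ring. -/
def UT (n : ℕ) (R : Type*) [CommRing R] : Subgroup (Matrix (Fin n) (Fin n) R)ˣ where
  carrier := {A | (∀ i j : Fin n, j < i → (A : Matrix (Fin n) (Fin n) R) i j = 0) ∧
    ∀ i : Fin n, (A : Matrix (Fin n) (Fin n) R) i i = 1}
  one_mem' := by
    refine ⟨fun i j hij => ?_, fun i => ?_⟩
    · simp [Matrix.one_apply, (ne_of_lt hij).symm]
    · simp
  mul_mem' := by
    rintro A B ⟨hA1, hA2⟩ ⟨hB1, hB2⟩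
    have hA : (A : Matrix (Fin n) (Fin n) R).BlockTriangular id := fun i j h => hA1 i j h
    have hB : (B : Matrix (Fin n) (Fin n) R).BlockTriangular id := fun i j h => hB1 i j h
    refine ⟨fun i j hij => ?_, fun i => ?_⟩
    · exact (hA.mul hB) (show (id : Fin n → Fin n) j < id i from hij)
    · rw [Units.val_mul, diag_mul_of_triangular hA hB, hA2, hB2, one_mul]
  inv_mem' := by
    rintro A ⟨hA1, hA2⟩
    have hA : (A : Matrix (Fin n) (Fin n) R).BlockTriangular id := fun i j h => hA1 i j h
    haveI := A.invertible
    have hAinv : ((A : Matrix (Fin n) (Fin n) R)⁻¹).BlockTriangular id :=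
      Matrix.blockTriangular_inv_of_blockTriangular hA
    have hcoe : ((A⁻¹ : (Matrix (Fin n) (Fin n) R)ˣ) : Matrix (Fin n) (Fin n) R)
        = (A : Matrix (Fin n) (Fin n) R)⁻¹ := Matrix.coe_units_inv A
    refine ⟨fun i j hij => ?_, fun i => ?_⟩
    · rw [hcoe]; exact hAinv (show (id : Fin n → Fin n) j < id i from hij)
    · have h1 : ((A : Matrix (Fin n) (Fin n) R) * (A : Matrix (Fin n) (Fin n) R)⁻¹) i i = 1 := by
        rw [Matrix.mul_inv_of_invertible]; simp
      rw [diag_mul_of_triangular hA hAinv, hA2, one_mul] at h1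
      rw [hcoe, h1]

/-- The group `T*(n,R)` of upper triangular `n × n` matrices over a linearly ordered field `R`
with positive diagonal entries, realised as a subgroup of the units of the matrix ring. -/
def Tstar (n : ℕ) (R : Type*) [Field R] [LinearOrder R] [IsStrictOrderedRing R] : Subgroup (Matrix (Fin n) (Fin n) R)ˣ where
  carrier := {A | (∀ i j : Fin n, j < i → (A : Matrix (Fin n) (Fin n) R) i j = 0) ∧
    ∀ i : Fin n, 0 < (A : Matrix (Fin n) (Fin n) R) i i}
  one_mem' := by
    refine ⟨fun i j hij => ?_, fun i => ?_⟩
    · simp [Matrix.one_apply, (ne_of_lt hij).symm]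
    · simp
  mul_mem' := by
    rintro A B ⟨hA1, hA2⟩ ⟨hB1, hB2⟩
    have hA : (A : Matrix (Fin n) (Fin n) R).BlockTriangular id := fun i j h => hA1 i j h
    have hB : (B : Matrix (Fin n) (Fin n) R).BlockTriangular id := fun i j h => hB1 i j h
    refine ⟨fun i j hij => ?_, fun i => ?_⟩
    · exact (hA.mul hB) (show (id : Fin n → Fin n) j < id i from hij)
    · rw [Units.val_mul, diag_mul_of_triangular hA hB]
      exact mul_pos (hA2 i) (hB2 i)
  inv_mem' := by
    rintro A ⟨hA1, hA2⟩
    have hA : (A : Matrix (Fin n) (Fin n) R).BlockTriangular id := fun i j h => hA1 i j h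
    haveI := A.invertible
    have hAinv : ((A : Matrix (Fin n) (Fin n) R)⁻¹).BlockTriangular id :=
      Matrix.blockTriangular_inv_of_blockTriangular hA
    have hcoe : ((A⁻¹ : (Matrix (Fin n) (Fin n) R)ˣ) : Matrix (Fin n) (Fin n) R)
        = (A : Matrix (Fin n) (Fin n) R)⁻¹ := Matrix.coe_units_inv A
    refine ⟨fun i j hij => ?_, fun i => ?_⟩
    · rw [hcoe]; exact hAinv (show (id : Fin n → Fin n) j < id i from hij)
    · have h1 : ((A : Matrix (Fin n) (Fin n) R) * (A : Matrix (Fin n) (Fin n) R)⁻¹) i i = 1 := by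
        rw [Matrix.mul_inv_of_invertible]; simp
      rw [diag_mul_of_triangular hA hAinv] at h1
      rw [hcoe]
      rcases lt_trichotomy ((A : Matrix (Fin n) (Fin n) R)⁻¹ i i) 0 with h | h | h
      · exact absurd h1 (by nlinarith [hA2 i])
      · rw [h, mul_zero] at h1; exact absurd h1 zero_ne_one
      · exact h

/-- The last index of `Fin N` (any element of `Fin N` witnesses `0 < N`). -/
def lastOf {N : ℕ} (r : Fin N) : Fin N := ⟨N - 1, Nat.sub_lt r.pos Nat.one_pos⟩

/-- A square matrix `g` (upper triangular, with positive diagonal and bottom-right entry `1`)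
is *essentially hyperbolic* if `g ≠ 1` and there is a row index `r` which is not the last row
such that `(g-1)_{r,N} ≠ 0` (where `N` is the last column) and every nonzero entry of `g - 1`
lies either in a row strictly above `r`, or at position `(r, N)`. -/
def EssentiallyHyperbolic {N : ℕ} {R : Type*} [CommRing R]
    (g : Matrix (Fin N) (Fin N) R) : Prop :=
  g ≠ 1 ∧ ∃ r : Fin N, (r : ℕ) + 1 < N ∧ (g - 1) r (lastOf r) ≠ 0 ∧
    ∀ i j : Fin N, (g - 1) i j ≠ 0 → i < r ∨ (i = r ∧ j = lastOf r)

end Matrices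

/-- The group of order-preserving additive automorphisms of a linearly ordered abelian
group `Λ`, as a subgroup of `AddAut Λ`. -/
def orderAddAut (Λ : Type*) [AddCommGroup Λ] [LinearOrder Λ] [IsOrderedAddMonoid Λ] : Subgroup (Multiplicative (AddAut Λ)) where
  carrier := {f | StrictMono ((Multiplicative.toAdd f : AddAut Λ) : Λ → Λ)}
  one_mem' := strictMono_id
  mul_mem' := by
    intro f g hf hg a b hab
    exact hf (hg hab)
  inv_mem' := by
    intro f hf a b hab
    exact hf.lt_iff_lt.1 (by simpa using hab)

theorem LexPow.lt_iff {R : Type*} {n : ℕ} [AddCommGroup R] [LinearOrder R] [IsOrderedAddMonoid R]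
    {x y : LexPow R n} :
    x < y ↔ ∃ k : Fin n, (∀ j, k < j → x j = y j) ∧ x k < y k := by
  have h : x < y ↔ Pi.Lex (· < ·) (· < ·) (fun i : Fin n => x (Fin.rev i))
      (fun i : Fin n => y (Fin.rev i)) := Iff.rfl
  rw [h]
  unfold Pi.Lex
  constructor
  · rintro ⟨i, h1, h2⟩
    exact ⟨Fin.rev i, fun j hj => by
      have := h1 (Fin.rev j) (by simpa using Fin.rev_lt_rev.2 hj)
      simpa using this, h2⟩
  · rintro ⟨k, h1, h2⟩
    refine ⟨Fin.rev k, fun j hj => h1 (Fin.rev j) ?_, by simpa using h2⟩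
    have : Fin.rev (Fin.rev k) < Fin.rev j := Fin.rev_lt_rev.2 hj
    rwa [Fin.rev_rev] at this

section Main
open LexPow Matrix
variable {n : ℕ}

instance : Module ℚ (LexPow ℚ n) := inferInstanceAs (Module ℚ (Fin n → ℚ))

theorem LexPow.pos_iff {x : LexPow ℚ n} :
    0 < x ↔ ∃ k : Fin n, (∀ j, k < j → x j = 0) ∧ 0 < x k := by
  rw [LexPow.lt_iff]
  exact exists_congr fun k => and_congr
    (forall_congr' fun j => forall_congr' fun _ => eq_comm) Iff.rfl

/-- the underlying linear map of an additive automorphism of `ℚ^n`. -/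
def linOf (f : AddAut (LexPow ℚ n)) : (Fin n → ℚ) →ₗ[ℚ] (Fin n → ℚ) :=
  AddMonoidHom.toRatLinearMap
    { toFun := fun x => LexPow.of.symm (f (LexPow.of x))
      map_zero' := map_zero f
      map_add' := fun a b => map_add f a b }

theorem linOf_comp (f g : AddAut (LexPow ℚ n)) :
    linOf (f + g) = (linOf f).comp (linOf g) := rfl

noncomputable def matOf (f : AddAut (LexPow ℚ n)) : Matrix (Fin n) (Fin n) ℚ :=
  LinearMap.toMatrix' (linOf f)

theorem matOf_mul (f g : AddAut (LexPow ℚ n)) : matOf (f + g) = matOf f * matOf g := by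
  rw [matOf, linOf_comp, LinearMap.toMatrix'_comp]; rfl

theorem matOf_one : matOf (0 : AddAut (LexPow ℚ n)) = 1 := LinearMap.toMatrix'_id

noncomputable def matUnit (f : AddAut (LexPow ℚ n)) : (Matrix (Fin n) (Fin n) ℚ)ˣ where
  val := matOf f
  inv := matOf (-f)
  val_inv := by rw [← matOf_mul, add_neg_cancel, matOf_one]
  inv_val := by rw [← matOf_mul, neg_add_cancel, matOf_one]

noncomputable def autOf (u : (Matrix (Fin n) (Fin n) ℚ)ˣ) : AddAut (LexPow ℚ n) where
  toFun x := LexPow.of ((u : Matrix (Fin n) (Fin n) ℚ) *ᵥ (LexPow.of.symm x))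
  invFun x := LexPow.of (((u⁻¹ : _) : Matrix (Fin n) (Fin n) ℚ) *ᵥ (LexPow.of.symm x))
  left_inv x := by
    show LexPow.of ((((u⁻¹ : _) : Matrix (Fin n) (Fin n) ℚ)) *ᵥ
        ((u : Matrix (Fin n) (Fin n) ℚ) *ᵥ (LexPow.of.symm x))) = x
    rw [Matrix.mulVec_mulVec, ← Units.val_mul, inv_mul_cancel, Units.val_one, Matrix.one_mulVec]
    exact LexPow.of.apply_symm_apply x
  right_inv x := by
    show LexPow.of (((u : Matrix (Fin n) (Fin n) ℚ)) *ᵥ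
        ((((u⁻¹ : _) : Matrix (Fin n) (Fin n) ℚ)) *ᵥ (LexPow.of.symm x))) = x
    rw [Matrix.mulVec_mulVec, ← Units.val_mul, mul_inv_cancel, Units.val_one, Matrix.one_mulVec]
    exact LexPow.of.apply_symm_apply x
  map_add' x y := by
    show LexPow.of ((u : Matrix (Fin n) (Fin n) ℚ) *ᵥ (LexPow.of.symm x + LexPow.of.symm y)) =
      LexPow.of ((u : Matrix (Fin n) (Fin n) ℚ) *ᵥ (LexPow.of.symm x)) +
      LexPow.of ((u : Matrix (Fin n) (Fin n) ℚ) *ᵥ (LexPow.of.symm y))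
    rw [Matrix.mulVec_add]
    rfl

theorem autOf_matUnit (f : AddAut (LexPow ℚ n)) : autOf (matUnit f) = f := by
  ext x
  show LexPow.of ((matOf f) *ᵥ (LexPow.of.symm x)) = f x
  rw [← Matrix.toLin'_apply, matOf, Matrix.toLin'_toMatrix']
  rfl

theorem matUnit_autOf (u : (Matrix (Fin n) (Fin n) ℚ)ˣ) : matUnit (autOf u) = u := by
  ext : 1
  show matOf (autOf u) = (u : Matrix (Fin n) (Fin n) ℚ)
  rw [matOf, ← LinearMap.toMatrix'_toLin' (u : Matrix (Fin n) (Fin n) ℚ)]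
  congr 1

noncomputable def matE : Multiplicative (AddAut (LexPow ℚ n)) ≃* (Matrix (Fin n) (Fin n) ℚ)ˣ where
  toFun f := matUnit (Multiplicative.toAdd f)
  invFun u := Multiplicative.ofAdd (autOf u)
  left_inv f := autOf_matUnit (Multiplicative.toAdd f)
  right_inv := matUnit_autOf
  map_mul' f g := by ext : 1; exact matOf_mul f g


theorem mulVec_pos (A : Matrix (Fin n) (Fin n) ℚ)
    (h1 : ∀ i j : Fin n, j < i → A i j = 0) (h2 : ∀ i, 0 < A i i)
    {x : LexPow ℚ n} (hx : 0 < x) : 0 < LexPow.of (A *ᵥ (LexPow.of.symm x)) := by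
  obtain ⟨k, hk0, hkpos⟩ := LexPow.pos_iff.1 hx
  refine LexPow.pos_iff.2 ⟨k, fun t ht => ?_, ?_⟩
  · show (A *ᵥ (LexPow.of.symm x)) t = 0
    show ∑ s, A t s * LexPow.of.symm x s = 0
    refine Finset.sum_eq_zero fun s _ => ?_
    rcases lt_or_ge s t with h | h
    · rw [h1 t s h, zero_mul]
    · have : LexPow.of.symm x s = 0 := hk0 s (lt_of_lt_of_le ht h)
      rw [this, mul_zero]
  · show 0 < (A *ᵥ (LexPow.of.symm x)) k
    show 0 < ∑ s, A k s * LexPow.of.symm x s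
    rw [Finset.sum_eq_single k]
    · exact mul_pos (h2 k) hkpos
    · intro s _ hs
      rcases lt_or_ge s k with h | h
      · rw [h1 k s h, zero_mul]
      · have hz : LexPow.of.symm x s = 0 := hk0 s (lt_of_le_of_ne h (Ne.symm hs))
        rw [hz, mul_zero]
    · intro h; exact absurd (Finset.mem_univ k) h

theorem strictMono_autOf (u : (Matrix (Fin n) (Fin n) ℚ)ˣ)
    (h1 : ∀ i j : Fin n, j < i → (u : Matrix (Fin n) (Fin n) ℚ) i j = 0)
    (h2 : ∀ i, 0 < (u : Matrix (Fin n) (Fin n) ℚ) i i) : StrictMono (autOf u) := by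
  intro x y hxy
  have hsub : (0 : LexPow ℚ n) < y - x := sub_pos.2 hxy
  have := mulVec_pos (u : Matrix (Fin n) (Fin n) ℚ) h1 h2 hsub
  have heq : LexPow.of ((u : Matrix (Fin n) (Fin n) ℚ) *ᵥ (LexPow.of.symm (y - x)))
      = autOf u y - autOf u x := map_sub (autOf u) y x
  rw [heq] at this
  exact sub_pos.1 this

theorem strictMono_fin_id {g : Fin n → Fin n} (hg : StrictMono g) (j : Fin n) : g j = j := by
  have hbij : Function.Bijective g := Finite.injective_iff_bijective.1 hg.injective
  let e : Fin n ≃o Fin n := StrictMono.orderIsoOfSurjective g hg hbij.2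
  have he : e = OrderIso.refl (Fin n) := Subsingleton.elim _ _
  have : e j = j := by rw [he]; rfl
  exact this

theorem matOf_mem (f : AddAut (LexPow ℚ n)) (hf : StrictMono f) :
    (∀ i j : Fin n, j < i → matOf f i j = 0) ∧ ∀ i : Fin n, 0 < matOf f i i := by
  set c : Fin n → LexPow ℚ n :=
    fun j => f (LexPow.of (fun t => if t = j then (1:ℚ) else 0)) with hc
  have hmat : ∀ i j, matOf f i j = LexPow.of.symm (c j) i := fun i j => by
    have hs : (Pi.single j (1:ℚ) : Fin n → ℚ) = fun t => if t = j then (1:ℚ) else 0 :=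
      funext fun t => Pi.single_apply j 1 t
    rw [matOf, LinearMap.toMatrix'_apply, hs]; rfl
  have hej : ∀ j : Fin n, (0 : LexPow ℚ n) < LexPow.of (fun t => if t = j then (1:ℚ) else 0) := by
    intro j
    refine LexPow.pos_iff.2 ⟨j, fun t ht => ?_, ?_⟩
    · show (if t = j then (1:ℚ) else 0) = 0
      rw [if_neg (ne_of_gt ht)]
    · show (0:ℚ) < if j = j then (1:ℚ) else 0
      rw [if_pos rfl]; norm_num
  have hcpos : ∀ j, (0 : LexPow ℚ n) < c j := by
    intro j
    have := hf (hej j)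
    rwa [map_zero] at this
  have hex : ∀ j, ∃ k : Fin n, (∀ t, k < t → LexPow.of.symm (c j) t = 0)
      ∧ 0 < LexPow.of.symm (c j) k := fun j => LexPow.pos_iff.1 (hcpos j)
  choose k hk0 hkpos using hex
  have hkmono : StrictMono k := by
    intro j j' hjj'
    by_contra hle
    push_neg at hle
    obtain ⟨m, hm⟩ := exists_nat_gt (LexPow.of.symm (c j') (k j) / LexPow.of.symm (c j) (k j))
    have hm' : LexPow.of.symm (c j') (k j) < (m:ℚ) * LexPow.of.symm (c j) (k j) :=
      (div_lt_iff₀ (hkpos j)).1 hm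
    have hlt1 : (m • (LexPow.of (fun t => if t = j then (1:ℚ) else 0)) : LexPow ℚ n)
        < LexPow.of (fun t => if t = j' then (1:ℚ) else 0) := by
      refine LexPow.lt_iff.2 ⟨j', fun t ht => ?_, ?_⟩
      · show m • (if t = j then (1:ℚ) else 0) = (if t = j' then (1:ℚ) else 0)
        rw [if_neg (ne_of_gt ht), if_neg (ne_of_gt (hjj'.trans ht)), smul_zero]
      · show m • (if j' = j then (1:ℚ) else 0) < (if j' = j' then (1:ℚ) else 0)
        rw [if_neg (ne_of_gt hjj'), if_pos rfl, smul_zero]; norm_num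
    have hlt2 : (m • c j : LexPow ℚ n) < c j' := by
      have := hf hlt1
      rwa [map_nsmul] at this
    have hlt3 : c j' < (m • c j : LexPow ℚ n) := by
      refine LexPow.lt_iff.2 ⟨k j, fun t ht => ?_, ?_⟩
      · show LexPow.of.symm (c j') t = m • LexPow.of.symm (c j) t
        rw [hk0 j' t (lt_of_le_of_lt hle ht), hk0 j t ht, smul_zero]
      · show LexPow.of.symm (c j') (k j) < m • LexPow.of.symm (c j) (k j)
        rwa [nsmul_eq_mul]
    exact absurd hlt2 (asymm hlt3)
  have hkid : ∀ j, k j = j := strictMono_fin_id hkmono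
  constructor
  · intro i j hji
    rw [hmat]
    exact hk0 j i (by rw [hkid]; exact hji)
  · intro i
    rw [hmat]
    have := hkpos i
    rwa [hkid] at this

end Main

/-- The group of order-preserving group automorphisms of `ℚ^n_lex` is
isomorphic to the group of `n × n` upper triangular rational matrices with positive
diagonal entries. -/

theorem orderAddAut_lexPow_rat_mulEquiv_Tstar (n : ℕ) :
    Nonempty (orderAddAut (LexPow ℚ n) ≃* Tstar n ℚ) := by
  have hmap : Subgroup.map (matE (n := n)).toMonoidHom (orderAddAut (LexPow ℚ n))
      = Tstar n ℚ := by
    ext u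
    rw [Subgroup.mem_map]
    constructor
    · rintro ⟨f, hf, rfl⟩
      have h := matOf_mem f hf
      exact ⟨h.1, h.2⟩
    · intro hu
      have hu1 : ∀ i j : Fin n, j < i → (u : Matrix (Fin n) (Fin n) ℚ) i j = 0 :=
        hu.1
      have hu2 : ∀ i : Fin n, 0 < (u : Matrix (Fin n) (Fin n) ℚ) i i := hu.2
      refine ⟨matE.symm u, ?_, matE.apply_symm_apply u⟩
      show StrictMono ((Multiplicative.toAdd (matE.symm u) : AddAut (LexPow ℚ n)) : LexPow ℚ n → LexPow ℚ n)
      exact strictMono_autOf u hu1 hu2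
  exact ⟨(matE.subgroupMap (orderAddAut (LexPow ℚ n))).trans (MulEquiv.subgroupCongr hmap)⟩
end

section
/- Let F be a free group and d ∈ ℕ. The free soluble group F / F^{(d)}, the quotient of F by the d-th term of its derived series, admits an essentially free orientation-preserving affine action on some linearly ordered abelian group. -/
/-- The bundled class of linearly ordered additive commutative groups (removed from Mathlib). -/
class LinearOrderedAddCommGroup (α : Type*) extends AddCommGroup α, LinearOrder α,
    IsOrderedAddMonoid α

/-- An orientation-preserving affine automorphism of a linearly ordered abelian group `Λ`:
an order-preserving bijection `g` of `Λ` admitting an order-preserving group automorphism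
`dilation` (the dilation factor) with `g x - g y = dilation (x - y)` for all `x, y`. -/
structure OPAffineAut (Λ : Type*) [LinearOrderedAddCommGroup Λ] extends Λ ≃ Λ where
  strictMono' : StrictMono toEquiv
  dilation : Λ ≃+ Λ
  dilation_strictMono : StrictMono dilation
  affine : ∀ x y : Λ, toEquiv x - toEquiv y = dilation (x - y)

namespace OPAffineAut

variable {Λ : Type*} [LinearOrderedAddCommGroup Λ]

instance : CoeFun (OPAffineAut Λ) (fun _ => Λ → Λ) := ⟨fun f => f.toEquiv⟩

theorem ext' {f g : OPAffineAut Λ} (h : ∀ x, f x = g x) : f = g := by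
  have he : f.toEquiv = g.toEquiv := Equiv.ext h
  have hd : f.dilation = g.dilation := AddEquiv.ext fun x => by
    have hf := f.affine x 0
    have hg := g.affine x 0
    rw [sub_zero] at hf hg
    rw [← hf, ← hg]
    show f x - f 0 = g x - g 0
    rw [h x, h 0]
  cases f; cases g
  cases he; cases hd
  rfl

instance : Group (OPAffineAut Λ) where
  one :=
    { toEquiv := Equiv.refl Λ
      strictMono' := strictMono_id
      dilation := AddEquiv.refl Λ
      dilation_strictMono := strictMono_id
      affine := fun _ _ => rfl }
  mul f g :=
    { toEquiv := g.toEquiv.trans f.toEquiv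
      strictMono' := f.strictMono'.comp g.strictMono'
      dilation := g.dilation.trans f.dilation
      dilation_strictMono := f.dilation_strictMono.comp g.dilation_strictMono
      affine := fun x y => by
        simp only [Equiv.trans_apply, AddEquiv.trans_apply]
        rw [f.affine, g.affine] }
  inv f :=
    { toEquiv := f.toEquiv.symm
      strictMono' := fun a b hab => f.strictMono'.lt_iff_lt.1 (by
        simpa only [Equiv.apply_symm_apply] using hab)
      dilation := f.dilation.symm
      dilation_strictMono := fun a b hab => f.dilation_strictMono.lt_iff_lt.1 (by
        simpa only [AddEquiv.apply_symm_apply] using hab)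
      affine := fun x y => f.dilation.injective (by
        rw [AddEquiv.apply_symm_apply, ← f.affine, Equiv.apply_symm_apply,
          Equiv.apply_symm_apply]) }
  mul_assoc f g h := ext' fun _ => rfl
  one_mul f := ext' fun _ => rfl
  mul_one f := ext' fun _ => rfl
  inv_mul_cancel f := ext' fun x => f.toEquiv.symm_apply_apply x

@[simp] theorem mul_apply (f g : OPAffineAut Λ) (x : Λ) : (f * g) x = f (g x) := rfl
@[simp] theorem one_apply (x : Λ) : (1 : OPAffineAut Λ) x = x := rfl
@[simp] theorem inv_apply (f : OPAffineAut Λ) (x : Λ) : f⁻¹ x = f.toEquiv.symm x := rfl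

/-- An affine automorphism is *hyperbolic* if it has no fixed point. -/
def Hyperbolic (f : OPAffineAut Λ) : Prop := ∀ x : Λ, f x ≠ x

/-- An affine automorphism is *rigid* if for `ε = ±1`, whenever `f^ε` moves some point up,
it moves every point up. -/
def Rigid (f : OPAffineAut Λ) : Prop :=
  ∀ ε : ℤ, ε = 1 ∨ ε = -1 → (∃ x : Λ, x < (f ^ ε) x) → ∀ y : Λ, y < (f ^ ε) y

end OPAffineAut

/-- An orientation-preserving affine action (a homomorphism into the group of
orientation-preserving affine automorphisms) is *free* if every nontrivial group element
acts without fixed points. -/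
def AffineActionFree {G Λ : Type*} [Group G] [LinearOrderedAddCommGroup Λ]
    (ρ : G →* OPAffineAut Λ) : Prop :=
  ∀ g : G, g ≠ 1 → ∀ x : Λ, ρ g x ≠ x

/-- An orientation-preserving affine action is *essentially free* if every nontrivial group
element acts as a rigid hyperbolic affine automorphism. -/
def AffineActionEssentiallyFree {G Λ : Type*} [Group G] [LinearOrderedAddCommGroup Λ]
    (ρ : G →* OPAffineAut Λ) : Prop :=
  ∀ g : G, g ≠ 1 → (ρ g).Rigid ∧ (ρ g).Hyperbolic

/-- `G` admits an essentially free orientation-preserving affine action on `Λ`. -/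
def HasEssentiallyFreeAffineAction (G : Type*) [Group G] (Λ : Type*)
    [LinearOrderedAddCommGroup Λ] : Prop :=
  ∃ ρ : G →* OPAffineAut Λ, AffineActionEssentiallyFree ρ

universe u
set_option linter.unusedSectionVars false

instance (G : Type*) [Group G] (d : ℕ) : (derivedSeries G d).Normal :=
  derivedSeries_normal G d

instance instLOACGOfParts {γ : Type*} [AddCommGroup γ] [LinearOrder γ] [IsOrderedAddMonoid γ] :
    LinearOrderedAddCommGroup γ := {}

section FreeSolubleConstruction

open Finsupp

variable {Λ : Type*} [LinearOrderedAddCommGroup Λ]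

/-- The affine automorphism `x ↦ e x + c`. -/
def affOf (e : Λ ≃+ Λ) (he : StrictMono e) (c : Λ) : OPAffineAut Λ where
  toFun := fun x => e x + c
  invFun := fun y => e.symm (y - c)
  left_inv := fun x => by simp
  right_inv := fun y => by simp
  strictMono' := fun a b h => by
    simpa using add_lt_add_right (he h) c
  dilation := e
  dilation_strictMono := he
  affine := fun x y => by
    show e x + c - (e y + c) = e (x - y)
    rw [add_sub_add_right_eq_sub, ← map_sub]

@[simp] lemma affOf_apply (e : Λ ≃+ Λ) (he : StrictMono e) (c : Λ) (x : Λ) :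
    affOf e he c x = e x + c := rfl

lemma OPAffineAut.apply_eq_dilation_add (f : OPAffineAut Λ) (x : Λ) :
    f x = f.dilation x + f 0 := by
  have h := f.affine x 0
  rw [sub_zero] at h
  have := eq_add_of_sub_eq h
  exact this

lemma rigid_of_uniform (f : OPAffineAut Λ)
    (h : ∀ x y : Λ, x < f x → y < f y) (h' : ∀ x y : Λ, x < f⁻¹ x → y < f⁻¹ y) :
    f.Rigid := by
  intro ε hε hex y
  rcases hε with rfl | rfl
  · simp only [zpow_one] at hex ⊢
    obtain ⟨x, hx⟩ := hex
    exact h x y hx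
  · simp only [zpow_neg_one] at hex ⊢
    obtain ⟨x, hx⟩ := hex
    exact h' x y hx

section OrderLayer

variable {β : Type*} [LinearOrder β] {Q : Type*} [Group Q] [LinearOrder Q]

/-- Permutation of the index set `Lex (Q × β)` by left multiplication. -/
def eIdx (q : Q) : Lex (Q × β) ≃ Lex (Q × β) :=
  (toLex (α := Q × β)).symm.trans (((Equiv.mulLeft q).prodCongr (Equiv.refl β)).trans toLex)

@[simp] lemma eIdx_apply (q p : Q) (i : β) : eIdx q (toLex (p, i)) = toLex (q * p, i) := by
  simp [eIdx]

lemma eIdx_apply' (q : Q) (j : Lex (Q × β)) :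
    eIdx q j = toLex (q * (ofLex j).1, (ofLex j).2) := by
  simp [eIdx, Prod.map_fst, Prod.map_snd, Prod.ext_iff]

lemma eIdx_symm_apply (q : Q) (j : Lex (Q × β)) :
    (eIdx q).symm j = toLex (q⁻¹ * (ofLex j).1, (ofLex j).2) := by
  rw [Equiv.symm_apply_eq, eIdx_apply']
  simp

lemma eIdx_strictMono [CovariantClass Q Q (· * ·) (· < ·)] (q : Q) :
    StrictMono (eIdx (β := β) q) := by
  intro x y hxy
  have hxy' := (Prod.Lex.toLex_lt_toLex (x := ofLex x) (y := ofLex y)).mp hxy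
  rw [eIdx_apply', eIdx_apply']
  refine (Prod.Lex.toLex_lt_toLex).mpr ?_
  rcases hxy' with h | ⟨h1, h2⟩
  · exact Or.inl (by simpa using mul_lt_mul_right h q)
  · exact Or.inr ⟨by simp [h1], by simpa using h2⟩

/-- The action of `q : Q` on the free abelian group on `Lex (Q × β)`. -/
noncomputable def actQ (q : Q) : (Lex (Q × β) →₀ ℤ) ≃+ (Lex (Q × β) →₀ ℤ) :=
  Finsupp.domCongr (eIdx q)

lemma actQ_apply (q : Q) (v : Lex (Q × β) →₀ ℤ) (j : Lex (Q × β)) :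
    actQ q v j = v ((eIdx q).symm j) := by
  simp [actQ, Finsupp.domCongr_apply, Finsupp.equivMapDomain_apply]

lemma actQ_single (q : Q) (j : Lex (Q × β)) (n : ℤ) :
    actQ q (Finsupp.single j n) = Finsupp.single (eIdx q j) n := by
  simp [actQ, Finsupp.domCongr_apply, Finsupp.equivMapDomain_single]

lemma actQ_one (v : Lex (Q × β) →₀ ℤ) : actQ (1 : Q) v = v := by
  ext j
  rw [actQ_apply, eIdx_symm_apply]
  simp

lemma actQ_actQ (q p : Q) (v : Lex (Q × β) →₀ ℤ) : actQ q (actQ p v) = actQ (q * p) v := by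
  ext j
  rw [actQ_apply, actQ_apply, actQ_apply, eIdx_symm_apply, eIdx_symm_apply, eIdx_symm_apply]
  simp [mul_assoc]

lemma lexlt_iff {γ : Type*} [LinearOrder γ] {v w : γ →₀ ℤ} :
    toLex v < toLex w ↔ Finsupp.Lex (· < ·) (· < ·) v w := Iff.rfl

lemma actQ_strictMono [CovariantClass Q Q (· * ·) (· < ·)] (q : Q)
    {v w : Lex (Q × β) →₀ ℤ} (h : toLex v < toLex w) : toLex (actQ q v) < toLex (actQ q w) := by
  rw [lexlt_iff] at h
  obtain ⟨j, hj, hjlt⟩ := Finsupp.lex_def.mp h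
  rw [lexlt_iff]
  refine Finsupp.lex_def.mpr ⟨eIdx q j, fun d hd => ?_, ?_⟩
  · rw [actQ_apply, actQ_apply]
    refine hj _ ?_
    have := (eIdx_strictMono (β := β) q).lt_iff_lt (a := (eIdx q).symm d) (b := j)
    rw [Equiv.apply_symm_apply] at this
    exact this.mp hd
  · rw [actQ_apply, actQ_apply, Equiv.symm_apply_apply]
    exact hjlt

end OrderLayer

/-- The underlying linearly ordered abelian group for the next step. -/
abbrev BigLam (Q β Λ : Type*) : Type _ := Lex (Λ × Lex ((Lex (Q × β)) →₀ ℤ))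

section DilLayer

variable {β : Type*} [LinearOrder β] {Q : Type*} [Group Q] [LinearOrder Q]

/-- Componentwise dilation on `BigLam`. -/
noncomputable def dilL (f : Λ ≃+ Λ) (g : (Lex (Q × β) →₀ ℤ) ≃+ (Lex (Q × β) →₀ ℤ)) :
    BigLam Q β Λ ≃+ BigLam Q β Λ where
  toFun x := toLex (f (ofLex x).1, toLex (g (ofLex (ofLex x).2)))
  invFun x := toLex (f.symm (ofLex x).1, toLex (g.symm (ofLex (ofLex x).2)))
  left_inv x := by simp
  right_inv x := by simp
  map_add' x y := by
    show toLex (f ((ofLex x).1 + (ofLex y).1),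
        toLex (g (ofLex (ofLex x).2 + ofLex (ofLex y).2)))
      = toLex (f (ofLex x).1 + f (ofLex y).1,
        toLex (g (ofLex (ofLex x).2) + g (ofLex (ofLex y).2)))
    rw [map_add, map_add]

lemma dilL_apply (f : Λ ≃+ Λ) (g : (Lex (Q × β) →₀ ℤ) ≃+ (Lex (Q × β) →₀ ℤ))
    (x : BigLam Q β Λ) :
    dilL f g x = toLex (f (ofLex x).1, toLex (g (ofLex (ofLex x).2))) := rfl

lemma dilL_strictMono (f : Λ ≃+ Λ) (g : (Lex (Q × β) →₀ ℤ) ≃+ (Lex (Q × β) →₀ ℤ))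
    (hf : StrictMono f)
    (hg : ∀ v w : Lex (Q × β) →₀ ℤ, toLex v < toLex w → toLex (g v) < toLex (g w)) :
    StrictMono (dilL f g) := by
  intro x y hxy
  have hxy' := (Prod.Lex.toLex_lt_toLex (x := ofLex x) (y := ofLex y)).mp hxy
  rw [dilL_apply, dilL_apply]
  refine (Prod.Lex.toLex_lt_toLex).mpr ?_
  rcases hxy' with h | ⟨h1, h2⟩
  · exact Or.inl (hf h)
  · exact Or.inr ⟨congrArg f h1, hg _ _ h2⟩

end DilLayer

section FreeLayer

variable {α : Type u} [LinearOrder α] (R : Subgroup (FreeGroup α)) [R.Normal]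
  [LinearOrder (FreeGroup α ⧸ R)]
  [CovariantClass (FreeGroup α ⧸ R) (FreeGroup α ⧸ R) (· * ·) (· < ·)]
  (Λ : Type u) [LinearOrderedAddCommGroup Λ] (ρ : FreeGroup α →* OPAffineAut Λ)

lemma bigLam_add (a c : Λ) (b d : (Lex ((FreeGroup α ⧸ R) × α)) →₀ ℤ) :
    (toLex (a, toLex b) + toLex (c, toLex d) : BigLam (FreeGroup α ⧸ R) α Λ)
      = toLex (a + c, toLex (b + d)) := rfl

/-- Image of a generator under the lifted action. -/
noncomputable def genA (i : α) : OPAffineAut (BigLam (FreeGroup α ⧸ R) α Λ) :=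
  affOf (dilL (ρ (FreeGroup.of i)).dilation (actQ (QuotientGroup.mk' R (FreeGroup.of i))))
    (dilL_strictMono _ _ (ρ (FreeGroup.of i)).dilation_strictMono
      (fun _ _ h => actQ_strictMono _ h))
    (toLex (ρ (FreeGroup.of i) 0, toLex (Finsupp.single (toLex (1, i)) 1)))

/-- The lifted action of the free group on `BigLam`. -/
noncomputable def rho2 : FreeGroup α →* OPAffineAut (BigLam (FreeGroup α ⧸ R) α Λ) :=
  FreeGroup.lift (genA R Λ ρ)

/-- `m` is the translation part of the action of `w` on the `Finsupp` coordinate. -/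
def IsForm (w : FreeGroup α) (m : Lex ((FreeGroup α ⧸ R) × α) →₀ ℤ) : Prop :=
  ∀ x : BigLam (FreeGroup α ⧸ R) α Λ,
    rho2 R Λ ρ w x
      = toLex (ρ w (ofLex x).1,
          toLex (actQ (QuotientGroup.mk' R w) (ofLex (ofLex x).2) + m))

lemma isForm_one : IsForm R Λ ρ 1 0 := by
  intro x
  simp only [map_one, OPAffineAut.one_apply, actQ_one, add_zero, toLex_ofLex]
  rfl

lemma isForm_of (i : α) :
    IsForm R Λ ρ (FreeGroup.of i) (Finsupp.single (toLex (1, i)) 1) := by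
  intro x
  have h1 : rho2 R Λ ρ (FreeGroup.of i) = genA R Λ ρ i := FreeGroup.lift_apply_of
  rw [h1]
  show dilL (ρ (FreeGroup.of i)).dilation (actQ (QuotientGroup.mk' R (FreeGroup.of i))) x
      + toLex (ρ (FreeGroup.of i) 0, toLex (Finsupp.single (toLex (1, i)) 1)) = _
  rw [dilL_apply, bigLam_add, ← OPAffineAut.apply_eq_dilation_add]

lemma isForm_mul {u v : FreeGroup α} {mu mv : Lex ((FreeGroup α ⧸ R) × α) →₀ ℤ}
    (hu : IsForm R Λ ρ u mu) (hv : IsForm R Λ ρ v mv) :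
    IsForm R Λ ρ (u * v) (actQ (QuotientGroup.mk' R u) mv + mu) := by
  intro x
  rw [map_mul, OPAffineAut.mul_apply, hv x, hu _]
  simp only [ofLex_toLex]
  refine congrArg toLex (Prod.ext ?_ ?_)
  · rw [map_mul ρ]; rfl
  · refine congrArg toLex ?_
    rw [show (actQ (QuotientGroup.mk' R u))
          ((actQ (QuotientGroup.mk' R v)) (ofLex (ofLex x).2) + mv)
        = (actQ (QuotientGroup.mk' R u))
            ((actQ (QuotientGroup.mk' R v)) (ofLex (ofLex x).2))
          + (actQ (QuotientGroup.mk' R u)) mv from map_add _ _ _,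
      actQ_actQ, ← map_mul, add_assoc]

lemma isForm_inv {w : FreeGroup α} {m : Lex ((FreeGroup α ⧸ R) × α) →₀ ℤ}
    (hw : IsForm R Λ ρ w m) :
    IsForm R Λ ρ w⁻¹ (actQ (QuotientGroup.mk' R w⁻¹) (-m)) := by
  intro x
  have key : rho2 R Λ ρ w (toLex (ρ w⁻¹ (ofLex x).1,
      toLex (actQ (QuotientGroup.mk' R w⁻¹) (ofLex (ofLex x).2)
        + actQ (QuotientGroup.mk' R w⁻¹) (-m)))) = x := by
    rw [hw]
    simp only [ofLex_toLex]
    conv_rhs => rw [← toLex_ofLex x]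
    refine congrArg toLex (Prod.ext ?_ ?_)
    · show (ρ w) ((ρ w⁻¹) (ofLex x).1) = (ofLex x).1
      rw [← OPAffineAut.mul_apply, ← map_mul, mul_inv_cancel, map_one, OPAffineAut.one_apply]
    · show toLex _ = (ofLex x).2
      rw [show (actQ (QuotientGroup.mk' R w))
            ((actQ (QuotientGroup.mk' R w⁻¹)) (ofLex (ofLex x).2)
              + (actQ (QuotientGroup.mk' R w⁻¹)) (-m))
          = (actQ (QuotientGroup.mk' R w))
              ((actQ (QuotientGroup.mk' R w⁻¹)) (ofLex (ofLex x).2))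
            + (actQ (QuotientGroup.mk' R w))
              ((actQ (QuotientGroup.mk' R w⁻¹)) (-m)) from map_add _ _ _,
        actQ_actQ, actQ_actQ, ← map_mul, mul_inv_cancel, map_one, actQ_one, actQ_one,
        neg_add_cancel_right, toLex_ofLex]
  conv_lhs => rw [← key]
  rw [← OPAffineAut.mul_apply, ← map_mul, inv_mul_cancel, map_one, OPAffineAut.one_apply]

lemma exists_isForm (w : FreeGroup α) : ∃ m, IsForm R Λ ρ w m := by
  induction w using FreeGroup.induction_on with
  | C1 => exact ⟨0, isForm_one R Λ ρ⟩
  | of i => exact ⟨_, isForm_of R Λ ρ i⟩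
  | inv_of i _ => exact ⟨_, isForm_inv R Λ ρ (isForm_of R Λ ρ i)⟩
  | mul u v hu hv =>
    obtain ⟨mu, hu⟩ := hu
    obtain ⟨mv, hv⟩ := hv
    exact ⟨_, isForm_mul R Λ ρ hu hv⟩

/-- The (Fox-derivative style) translation cocycle. -/
noncomputable def Dm (w : FreeGroup α) : Lex ((FreeGroup α ⧸ R) × α) →₀ ℤ :=
  (exists_isForm R Λ ρ w).choose

lemma isForm_Dm (w : FreeGroup α) : IsForm R Λ ρ w (Dm R Λ ρ w) :=
  (exists_isForm R Λ ρ w).choose_spec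

lemma isForm_unique {w : FreeGroup α} {m m' : Lex ((FreeGroup α ⧸ R) × α) →₀ ℤ}
    (h : IsForm R Λ ρ w m) (h' : IsForm R Λ ρ w m') : m = m' := by
  have heq := (h (toLex (0, toLex 0))).symm.trans (h' (toLex (0, toLex 0)))
  have h2 := congrArg (fun z : BigLam (FreeGroup α ⧸ R) α Λ => ofLex (ofLex z).2) heq
  simpa using h2

lemma Dm_one : Dm R Λ ρ 1 = 0 :=
  isForm_unique R Λ ρ (isForm_Dm R Λ ρ 1) (isForm_one R Λ ρ)

lemma Dm_of (i : α) : Dm R Λ ρ (FreeGroup.of i) = Finsupp.single (toLex (1, i)) 1 :=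
  isForm_unique R Λ ρ (isForm_Dm R Λ ρ _) (isForm_of R Λ ρ i)

lemma Dm_mul (u v : FreeGroup α) :
    Dm R Λ ρ (u * v) = actQ (QuotientGroup.mk' R u) (Dm R Λ ρ v) + Dm R Λ ρ u :=
  isForm_unique R Λ ρ (isForm_Dm R Λ ρ _)
    (isForm_mul R Λ ρ (isForm_Dm R Λ ρ u) (isForm_Dm R Λ ρ v))

lemma Dm_inv (w : FreeGroup α) :
    Dm R Λ ρ w⁻¹ = actQ (QuotientGroup.mk' R w⁻¹) (-(Dm R Λ ρ w)) :=
  isForm_unique R Λ ρ (isForm_Dm R Λ ρ _) (isForm_inv R Λ ρ (isForm_Dm R Λ ρ w))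

lemma pr_eq_one_of_mem {w : FreeGroup α} (hw : w ∈ R) : QuotientGroup.mk' R w = 1 :=
  (QuotientGroup.eq_one_iff w).mpr hw

lemma pr_Dm_of_mem_commutator {w : FreeGroup α} (hw : w ∈ ⁅R, R⁆) :
    QuotientGroup.mk' R w = 1 ∧ Dm R Λ ρ w = 0 := by
  let K : Subgroup (FreeGroup α) :=
    { carrier := {w | QuotientGroup.mk' R w = 1 ∧ Dm R Λ ρ w = 0}
      one_mem' := ⟨map_one _, Dm_one R Λ ρ⟩
      mul_mem' := by
        rintro a b ⟨ha1, ha2⟩ ⟨hb1, hb2⟩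
        refine ⟨by rw [map_mul, ha1, hb1, one_mul], ?_⟩
        rw [Dm_mul, ha2, hb2, map_zero, add_zero]
      inv_mem' := by
        rintro a ⟨ha1, ha2⟩
        refine ⟨by rw [map_inv, ha1, inv_one], ?_⟩
        rw [Dm_inv, ha2, neg_zero, map_zero] }
  have hle : ⁅R, R⁆ ≤ K := by
    rw [Subgroup.commutator_le]
    intro g1 hg1 g2 hg2
    have h1 : QuotientGroup.mk' R g1 = 1 := pr_eq_one_of_mem R hg1
    have h2 : QuotientGroup.mk' R g2 = 1 := pr_eq_one_of_mem R hg2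
    refine ⟨by simp [commutatorElement_def, map_mul, map_inv, h1, h2], ?_⟩
    show Dm R Λ ρ (g1 * g2 * g1⁻¹ * g2⁻¹) = 0
    rw [Dm_mul, Dm_mul, Dm_mul, Dm_inv, Dm_inv]
    simp only [map_mul, map_inv, h1, h2, one_mul, mul_one, inv_one, actQ_one]
    abel
  exact hle hw

section Magnus

/-- A set-theoretic section of the quotient map, sending `1` to `1`. -/
noncomputable def secQ (q : FreeGroup α ⧸ R) : FreeGroup α := if q = 1 then 1 else q.out

lemma pr_secQ (q : FreeGroup α ⧸ R) : QuotientGroup.mk' R (secQ R q) = q := by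
  unfold secQ
  split
  · rename_i h; rw [map_one, h]
  · rw [QuotientGroup.mk'_apply]; exact QuotientGroup.out_eq' q

lemma secQ_one : secQ R (1 : FreeGroup α ⧸ R) = 1 := if_pos rfl

lemma mem_secQ_aux (q : FreeGroup α ⧸ R) (w : FreeGroup α) :
    secQ R q * w * (secQ R (q * QuotientGroup.mk' R w))⁻¹ ∈ R := by
  refine (QuotientGroup.eq_one_iff _).mp ?_
  rw [show ((secQ R q * w * (secQ R (q * QuotientGroup.mk' R w))⁻¹ : FreeGroup α) :
        FreeGroup α ⧸ R)
      = QuotientGroup.mk' R (secQ R q * w * (secQ R (q * QuotientGroup.mk' R w))⁻¹) from rfl]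
  rw [map_mul, map_mul, map_inv, pr_secQ, pr_secQ]
  exact mul_inv_cancel _

/-- Generator images in the abelianization of `R`. -/
noncomputable def bbElt (j : Lex ((FreeGroup α ⧸ R) × α)) : ↥R :=
  ⟨secQ R (ofLex j).1 * FreeGroup.of (ofLex j).2
      * (secQ R ((ofLex j).1 * QuotientGroup.mk' R (FreeGroup.of (ofLex j).2)))⁻¹,
    mem_secQ_aux R _ _⟩

/-- The retraction homomorphism to the abelianization of `R`. -/
noncomputable def Bhom : (Lex ((FreeGroup α ⧸ R) × α) →₀ ℤ) →+ Additive (Abelianization ↥R) :=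
  Finsupp.liftAddHom fun j => zmultiplesHom _ (Additive.ofMul (Abelianization.of (bbElt R j)))

lemma Bhom_single (j : Lex ((FreeGroup α ⧸ R) × α)) (n : ℤ) :
    Bhom R (Finsupp.single j n) = n • Additive.ofMul (Abelianization.of (bbElt R j)) := by
  rw [Bhom, Finsupp.liftAddHom_apply_single, zmultiplesHom_apply]

/-- The class of `s(q) w s(q·π w)⁻¹` in the abelianization of `R`. -/
noncomputable def psiElt (w : FreeGroup α) (q : FreeGroup α ⧸ R) : Abelianization ↥R :=
  Abelianization.of ⟨secQ R q * w * (secQ R (q * QuotientGroup.mk' R w))⁻¹, mem_secQ_aux R q w⟩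

lemma abel_of_eq {a b : FreeGroup α} (ha : a ∈ R) (hb : b ∈ R) (h : a = b) :
    Abelianization.of (⟨a, ha⟩ : ↥R) = Abelianization.of ⟨b, hb⟩ := by subst h; rfl

lemma abel_of_eq_one {a : FreeGroup α} (ha : a ∈ R) (h : a = 1) :
    Abelianization.of (⟨a, ha⟩ : ↥R) = 1 := by
  subst h
  rw [show (⟨(1 : FreeGroup α), ha⟩ : ↥R) = 1 from Subtype.ext rfl, map_one]

lemma abel_of_mul {a b c : FreeGroup α} (ha : a ∈ R) (hb : b ∈ R) (hc : c ∈ R)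
    (h : c = a * b) :
    Abelianization.of (⟨c, hc⟩ : ↥R)
      = Abelianization.of ⟨a, ha⟩ * Abelianization.of ⟨b, hb⟩ := by
  subst h; rw [← map_mul]; rfl

lemma abel_of_inv {a b : FreeGroup α} (ha : a ∈ R) (hb : b ∈ R) (h : b = a⁻¹) :
    Abelianization.of (⟨b, hb⟩ : ↥R) = (Abelianization.of ⟨a, ha⟩)⁻¹ := by
  subst h; rw [← map_inv]; rfl

/-- The key crossed-homomorphism identity. -/
def KeyP (w : FreeGroup α) : Prop :=
  ∀ q : FreeGroup α ⧸ R,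
    Bhom R (actQ q (Dm R Λ ρ w)) = Additive.ofMul (psiElt R w q)

lemma keyP_one : KeyP R Λ ρ 1 := by
  intro q
  rw [Dm_one, map_zero, map_zero]
  have h1 : psiElt R (1 : FreeGroup α) q = 1 :=
    abel_of_eq_one R _ (by rw [map_one, mul_one, mul_one, mul_inv_cancel])
  rw [h1]
  rfl

lemma keyP_of (i : α) : KeyP R Λ ρ (FreeGroup.of i) := by
  intro q
  rw [Dm_of, actQ_single, eIdx_apply, Bhom_single, one_smul]
  exact congrArg Additive.ofMul (abel_of_eq R _ _ (by simp))

lemma keyP_inv {w : FreeGroup α} (hw : KeyP R Λ ρ w) : KeyP R Λ ρ w⁻¹ := by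
  intro q
  rw [Dm_inv, actQ_actQ,
    show actQ (q * QuotientGroup.mk' R w⁻¹) (-(Dm R Λ ρ w))
      = -(actQ (q * QuotientGroup.mk' R w⁻¹) (Dm R Λ ρ w)) from map_neg _ _,
    show Bhom R (-(actQ (q * QuotientGroup.mk' R w⁻¹) (Dm R Λ ρ w)))
      = -(Bhom R (actQ (q * QuotientGroup.mk' R w⁻¹) (Dm R Λ ρ w))) from map_neg _ _,
    hw (q * QuotientGroup.mk' R w⁻¹), ← ofMul_inv]
  refine congrArg Additive.ofMul ?_
  refine (abel_of_inv R _ _ ?_).symm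
  rw [map_inv, inv_mul_cancel_right]
  group

lemma keyP_mul {u v : FreeGroup α} (hu : KeyP R Λ ρ u) (hv : KeyP R Λ ρ v) :
    KeyP R Λ ρ (u * v) := by
  intro q
  rw [Dm_mul,
    show actQ q (actQ (QuotientGroup.mk' R u) (Dm R Λ ρ v) + Dm R Λ ρ u)
      = actQ q (actQ (QuotientGroup.mk' R u) (Dm R Λ ρ v)) + actQ q (Dm R Λ ρ u)
      from map_add _ _ _,
    actQ_actQ,
    show Bhom R (actQ (q * QuotientGroup.mk' R u) (Dm R Λ ρ v) + actQ q (Dm R Λ ρ u))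
      = Bhom R (actQ (q * QuotientGroup.mk' R u) (Dm R Λ ρ v))
        + Bhom R (actQ q (Dm R Λ ρ u)) from map_add _ _ _,
    hu q, hv (q * QuotientGroup.mk' R u), ← ofMul_mul]
  refine congrArg Additive.ofMul ?_
  rw [mul_comm]
  refine (abel_of_mul R _ _ _ ?_).symm
  rw [map_mul, ← mul_assoc]
  group

lemma keyP_all (w : FreeGroup α) : KeyP R Λ ρ w := by
  induction w using FreeGroup.induction_on with
  | C1 => exact keyP_one R Λ ρ
  | of i => exact keyP_of R Λ ρ i
  | inv_of i ih => exact keyP_inv R Λ ρ ih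
  | mul u v hu hv => exact keyP_mul R Λ ρ hu hv

/-- **Magnus' theorem** (injectivity of the Magnus embedding on `R/[R,R]`). -/
lemma mem_commutator_of_Dm_eq_zero {w : FreeGroup α} (hw : w ∈ R)
    (hD : Dm R Λ ρ w = 0) : w ∈ ⁅R, R⁆ := by
  have h := keyP_all R Λ ρ w 1
  rw [hD, map_zero, map_zero] at h
  have hval : psiElt R w 1 = Abelianization.of ⟨w, hw⟩ :=
    abel_of_eq R _ hw (by simp [secQ_one, pr_eq_one_of_mem R hw])
  rw [hval] at h
  have h1 : Abelianization.of (⟨w, hw⟩ : ↥R) = 1 := by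
    have := h.symm
    exact ofMul_eq_zero.mp this
  have hcomm : (⟨w, hw⟩ : ↥R) ∈ ⁅(⊤ : Subgroup ↥R), (⊤ : Subgroup ↥R)⁆ := by
    rw [← commutator_def]
    exact (QuotientGroup.eq_one_iff _).mp h1
  have hmap : w ∈ Subgroup.map R.subtype ⁅(⊤ : Subgroup ↥R), (⊤ : Subgroup ↥R)⁆ :=
    ⟨⟨w, hw⟩, hcomm, rfl⟩
  rwa [Subgroup.map_commutator, ← MonoidHom.range_eq_map, Subgroup.range_subtype] at hmap

end Magnus

section StepLemmas

lemma commutator_le_self : (⁅R, R⁆ : Subgroup (FreeGroup α)) ≤ R :=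
  Subgroup.commutator_le.mpr fun a ha b hb => by
    rw [commutatorElement_def]
    exact mul_mem (mul_mem (mul_mem ha hb) (inv_mem ha)) (inv_mem hb)

lemma rho2_eq_one (hker : ∀ w ∈ R, ρ w = 1) {w : FreeGroup α} (hw : w ∈ ⁅R, R⁆) :
    rho2 R Λ ρ w = 1 := by
  obtain ⟨h1, h2⟩ := pr_Dm_of_mem_commutator R Λ ρ hw
  have hwR : w ∈ R := commutator_le_self R hw
  apply OPAffineAut.ext'
  intro x
  rw [OPAffineAut.one_apply, isForm_Dm R Λ ρ w x, h1, h2, add_zero, actQ_one,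
    hker w hwR, OPAffineAut.one_apply]
  rfl

lemma rho2_uniform (hker : ∀ w ∈ R, ρ w = 1)
    (hreg : ∀ w ∉ R, (ρ w).Rigid ∧ (ρ w).Hyperbolic)
    {w : FreeGroup α} (hw : w ∉ ⁅R, R⁆) :
    (∀ x : BigLam (FreeGroup α ⧸ R) α Λ, rho2 R Λ ρ w x ≠ x) ∧
    (∀ x y : BigLam (FreeGroup α ⧸ R) α Λ,
      x < rho2 R Λ ρ w x → y < rho2 R Λ ρ w y) := by
  by_cases hwR : w ∈ R
  · have h1 : QuotientGroup.mk' R w = 1 := pr_eq_one_of_mem R hwR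
    have hD : Dm R Λ ρ w ≠ 0 := fun h0 =>
      hw (mem_commutator_of_Dm_eq_zero R Λ ρ hwR h0)
    have hform : ∀ x : BigLam (FreeGroup α ⧸ R) α Λ,
        rho2 R Λ ρ w x = toLex ((ofLex x).1, (ofLex x).2 + toLex (Dm R Λ ρ w)) := by
      intro x
      rw [isForm_Dm R Λ ρ w x, h1, actQ_one, hker w hwR, OPAffineAut.one_apply]
      rfl
    constructor
    · intro x heq
      rw [hform x] at heq
      have h2 := congrArg (fun z : BigLam (FreeGroup α ⧸ R) α Λ => (ofLex z).2) heq
      simp only [ofLex_toLex] at h2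
      have h3 : toLex (Dm R Λ ρ w) = (0 : Lex (Lex ((FreeGroup α ⧸ R) × α) →₀ ℤ)) :=
        add_eq_left.mp h2
      exact hD h3
    · intro x y hx
      rw [hform x] at hx
      rw [hform y]
      have hx' := (Prod.Lex.toLex_lt_toLex (x := ofLex x)).mp hx
      have hpos : (0 : Lex (Lex ((FreeGroup α ⧸ R) × α) →₀ ℤ)) < toLex (Dm R Λ ρ w) := by
        rcases hx' with h | ⟨_, h⟩
        · exact absurd h (lt_irrefl _)
        · exact (lt_add_iff_pos_right _).mp h
      exact (Prod.Lex.toLex_lt_toLex (x := ofLex y)).mpr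
        (Or.inr ⟨rfl, (lt_add_iff_pos_right _).mpr hpos⟩)
  · have hhyp := (hreg w hwR).2
    have hrig := (hreg w hwR).1
    constructor
    · intro x heq
      rw [isForm_Dm R Λ ρ w x] at heq
      have h2 := congrArg (fun z : BigLam (FreeGroup α ⧸ R) α Λ => (ofLex z).1) heq
      simp only [ofLex_toLex] at h2
      exact hhyp (ofLex x).1 h2
    · intro x y hx
      rw [isForm_Dm R Λ ρ w x] at hx
      rw [isForm_Dm R Λ ρ w y]
      have hx' := (Prod.Lex.toLex_lt_toLex (x := ofLex x)).mp hx
      have hlt : (ofLex x).1 < ρ w (ofLex x).1 := by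
        rcases hx' with h | ⟨h, _⟩
        · exact h
        · exact absurd h.symm (hhyp (ofLex x).1)
      have hall : ∀ z : Λ, z < ρ w z := by
        have := hrig 1 (Or.inl rfl) ⟨(ofLex x).1, by simpa [zpow_one] using hlt⟩
        intro z
        simpa [zpow_one] using this z
      exact (Prod.Lex.toLex_lt_toLex (x := ofLex y)).mpr (Or.inl (hall (ofLex y).1))

lemma rho2_reg (hker : ∀ w ∈ R, ρ w = 1)
    (hreg : ∀ w ∉ R, (ρ w).Rigid ∧ (ρ w).Hyperbolic)
    {w : FreeGroup α} (hw : w ∉ ⁅R, R⁆) :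
    (rho2 R Λ ρ w).Rigid ∧ (rho2 R Λ ρ w).Hyperbolic := by
  have hu := rho2_uniform R Λ ρ hker hreg hw
  have hwinv : w⁻¹ ∉ (⁅R, R⁆ : Subgroup (FreeGroup α)) := fun h =>
    hw ((Subgroup.inv_mem_iff _).mp h)
  have hui := rho2_uniform R Λ ρ hker hreg hwinv
  refine ⟨?_, hu.1⟩
  refine rigid_of_uniform _ hu.2 ?_
  rw [show (rho2 R Λ ρ w)⁻¹ = rho2 R Λ ρ w⁻¹ from (map_inv _ _).symm]
  exact hui.2

/-- The coordinates of an element of the new quotient. -/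
noncomputable def gQ (x : FreeGroup α ⧸ (⁅R, R⁆ : Subgroup (FreeGroup α))) :
    Lex ((FreeGroup α ⧸ R) × Lex (Lex ((FreeGroup α ⧸ R) × α) →₀ ℤ)) :=
  toLex (QuotientGroup.mk' R x.out, toLex (Dm R Λ ρ x.out))

lemma pr_Dm_eq_of_mk_eq {a b : FreeGroup α}
    (h : (QuotientGroup.mk a : FreeGroup α ⧸ (⁅R, R⁆ : Subgroup (FreeGroup α)))
        = QuotientGroup.mk b) :
    QuotientGroup.mk' R a = QuotientGroup.mk' R b ∧ Dm R Λ ρ a = Dm R Λ ρ b := by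
  have hz : a⁻¹ * b ∈ (⁅R, R⁆ : Subgroup (FreeGroup α)) := QuotientGroup.eq.mp h
  obtain ⟨h1, h2⟩ := pr_Dm_of_mem_commutator R Λ ρ hz
  have hb : b = a * (a⁻¹ * b) := by group
  constructor
  · conv_rhs => rw [hb]
    rw [map_mul, h1, mul_one]
  · conv_rhs => rw [hb]
    rw [Dm_mul, h2, map_zero, zero_add]

lemma gQ_mk (u : FreeGroup α) :
    gQ R Λ ρ (QuotientGroup.mk u) = toLex (QuotientGroup.mk' R u, toLex (Dm R Λ ρ u)) := by
  obtain ⟨h1, h2⟩ := pr_Dm_eq_of_mk_eq R Λ ρ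
    (show (QuotientGroup.mk ((QuotientGroup.mk u : FreeGroup α ⧸ _).out)
        : FreeGroup α ⧸ (⁅R, R⁆ : Subgroup (FreeGroup α))) = QuotientGroup.mk u from
      QuotientGroup.out_eq' _)
  rw [gQ, h1, h2]

lemma gQ_injective : Function.Injective (gQ R Λ ρ) := by
  intro x y h
  have h1 := congrArg (fun z : Lex ((FreeGroup α ⧸ R) × Lex (Lex ((FreeGroup α ⧸ R) × α) →₀ ℤ))
    => (ofLex z).1) h
  have h2 := congrArg (fun z : Lex ((FreeGroup α ⧸ R) × Lex (Lex ((FreeGroup α ⧸ R) × α) →₀ ℤ))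
    => ofLex (ofLex z).2) h
  simp only [gQ, ofLex_toLex] at h1 h2
  have hR : x.out⁻¹ * y.out ∈ R := by
    have hone : QuotientGroup.mk' R (x.out⁻¹ * y.out) = 1 := by
      rw [map_mul, map_inv, h1, inv_mul_cancel]
    exact (QuotientGroup.eq_one_iff _).mp hone
  have hmem : x.out⁻¹ * y.out ∈ (⁅R, R⁆ : Subgroup (FreeGroup α)) := by
    refine mem_commutator_of_Dm_eq_zero R Λ ρ hR ?_
    rw [Dm_mul, Dm_inv, h2,
      show (actQ (QuotientGroup.mk' R x.out⁻¹)) (Dm R Λ ρ y.out)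
          + (actQ (QuotientGroup.mk' R x.out⁻¹)) (-(Dm R Λ ρ y.out))
        = (actQ (QuotientGroup.mk' R x.out⁻¹)) (Dm R Λ ρ y.out + -(Dm R Λ ρ y.out))
        from (map_add _ _ _).symm, add_neg_cancel, map_zero]
  calc x = QuotientGroup.mk x.out := (QuotientGroup.out_eq' x).symm
  _ = QuotientGroup.mk y.out := QuotientGroup.eq.mpr hmem
  _ = y := QuotientGroup.out_eq' y

/-- The new left-invariant linear order on the quotient. -/
noncomputable def linQ' : LinearOrder (FreeGroup α ⧸ (⁅R, R⁆ : Subgroup (FreeGroup α))) :=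
  LinearOrder.lift' (gQ R Λ ρ) (gQ_injective R Λ ρ)

lemma covQ' :
    letI := linQ' R Λ ρ
    CovariantClass (FreeGroup α ⧸ (⁅R, R⁆ : Subgroup (FreeGroup α)))
      (FreeGroup α ⧸ (⁅R, R⁆ : Subgroup (FreeGroup α))) (· * ·) (· < ·) := by
  letI := linQ' R Λ ρ
  constructor
  intro a b c hbc
  obtain ⟨u, rfl⟩ := QuotientGroup.mk_surjective a
  obtain ⟨v, rfl⟩ := QuotientGroup.mk_surjective b
  obtain ⟨t, rfl⟩ := QuotientGroup.mk_surjective c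
  have hbc' : gQ R Λ ρ (QuotientGroup.mk v) < gQ R Λ ρ (QuotientGroup.mk t) := hbc
  show gQ R Λ ρ (QuotientGroup.mk u * QuotientGroup.mk v)
      < gQ R Λ ρ (QuotientGroup.mk u * QuotientGroup.mk t)
  rw [show (QuotientGroup.mk u * QuotientGroup.mk v
      : FreeGroup α ⧸ (⁅R, R⁆ : Subgroup (FreeGroup α))) = QuotientGroup.mk (u * v) from rfl,
    show (QuotientGroup.mk u * QuotientGroup.mk t
      : FreeGroup α ⧸ (⁅R, R⁆ : Subgroup (FreeGroup α))) = QuotientGroup.mk (u * t) from rfl,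
    gQ_mk, gQ_mk]
  rw [gQ_mk, gQ_mk] at hbc'
  have hbc'' := (Prod.Lex.toLex_lt_toLex).mp hbc'
  dsimp only at hbc''
  refine (Prod.Lex.toLex_lt_toLex).mpr ?_
  dsimp only
  rcases hbc'' with h | ⟨h1, h2⟩
  · left
    rw [map_mul, map_mul]
    exact mul_lt_mul_right h _
  · right
    constructor
    · rw [map_mul, map_mul, h1]
    · rw [Dm_mul, Dm_mul]
      have hlt := actQ_strictMono (β := α) (QuotientGroup.mk' R u) h2
      exact add_lt_add_left hlt _

end StepLemmas

end FreeLayer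

end FreeSolubleConstruction

/-- Data bundle for the induction along the derived series. -/
structure SubData (α : Type u) [LinearOrder α] (R : Subgroup (FreeGroup α)) [R.Normal] :
    Type (u + 1) where
  Lam : Type u
  [inst : LinearOrderedAddCommGroup Lam]
  rho : FreeGroup α →* OPAffineAut Lam
  ker_le : ∀ w ∈ R, rho w = 1
  reg : ∀ w ∉ R, (rho w).Rigid ∧ (rho w).Hyperbolic
  [lin : LinearOrder (FreeGroup α ⧸ R)]
  cov : CovariantClass (FreeGroup α ⧸ R) (FreeGroup α ⧸ R) (· * ·) (· < ·)

theorem subData_step {α : Type u} [LinearOrder α] (R : Subgroup (FreeGroup α)) [R.Normal]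
    (data : SubData α R) : Nonempty (SubData α ⁅R, R⁆) := by
  letI := data.inst
  letI := data.lin
  haveI := data.cov
  letI lin' := linQ' R data.Lam data.rho
  haveI cov' := covQ' R data.Lam data.rho
  exact ⟨{
    Lam := BigLam (FreeGroup α ⧸ R) α data.Lam
    rho := rho2 R data.Lam data.rho
    ker_le := fun w hw => rho2_eq_one R data.Lam data.rho data.ker_le hw
    reg := fun w hw => rho2_reg R data.Lam data.rho data.ker_le data.reg hw
    lin := lin'
    cov := cov' }⟩

theorem subData_top (α : Type u) [LinearOrder α] :
    Nonempty (SubData α (⊤ : Subgroup (FreeGroup α))) := by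
  haveI : Subsingleton (FreeGroup α ⧸ (⊤ : Subgroup (FreeGroup α))) :=
    QuotientGroup.subsingleton_quotient_top
  letI lin0 : LinearOrder (FreeGroup α ⧸ (⊤ : Subgroup (FreeGroup α))) :=
    LinearOrder.lift' (fun _ => (0 : ℤ)) (fun a b _ => Subsingleton.elim a b)
  exact ⟨{
    Lam := Lex (α →₀ ℤ)
    rho := 1
    ker_le := fun w _ => rfl
    reg := fun w hw => absurd (Subgroup.mem_top w) hw
    lin := lin0
    cov := ⟨fun a b c hbc =>
      absurd hbc (fun h => lt_irrefl c (Subsingleton.elim b c ▸ h))⟩ }⟩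

theorem subData_all (α : Type u) [LinearOrder α] (d : ℕ) :
    Nonempty (SubData α (derivedSeries (FreeGroup α) d)) := by
  induction d with
  | zero => exact subData_top α
  | succ d ih =>
    obtain ⟨data⟩ := ih
    exact subData_step _ data

/-- Every free soluble group (the quotient of a free group by a term of its
derived series) admits an essentially free orientation-preserving affine action on some
linearly ordered abelian group. -/
theorem freeSoluble_hasEssentiallyFreeAffineAction (α : Type u) (d : ℕ) :
    ∃ (Λ : Type u) (instΛ : LinearOrderedAddCommGroup Λ),
      @HasEssentiallyFreeAffineAction (FreeGroup α ⧸ derivedSeries (FreeGroup α) d) _ Λ instΛ := by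
  letI : LinearOrder α := IsWellOrder.linearOrder WellOrderingRel
  obtain ⟨data⟩ := subData_all α d
  letI := data.inst
  refine ⟨data.Lam, inferInstance, ?_⟩
  have hker : derivedSeries (FreeGroup α) d ≤ (data.rho).ker := fun w hw => by
    simpa [MonoidHom.mem_ker] using data.ker_le w hw
  refine ⟨QuotientGroup.lift _ data.rho hker, ?_⟩
  intro g hg
  obtain ⟨w, rfl⟩ := QuotientGroup.mk_surjective g
  have hw : w ∉ derivedSeries (FreeGroup α) d := fun hmem =>
    hg ((QuotientGroup.eq_one_iff w).mpr hmem)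
  have hres := data.reg w hw
  rw [QuotientGroup.lift_mk']
  exact hres
end
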